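/- Fix ω = 1/√3 ∈ ℂ. For every (c,a) ∈ ℂ² there exist R > 0 and an injective holomorphic function φ on {z ∈ ℂ : |z| > R} such that |P_{c,a}(z)| > R and φ(P_{c,a}(z)) = φ(z)³ for all |z| > R, and φ(z) − ω(z − c/2) → 0 as |z| → ∞. Moreover φ is unique near infinity: any holomorphic ψ defined on {|z| > R'} for some R' ≥ R satisfying ψ(P_{c,a}(z)) = ψ(z)³ and ψ(z) − ω(z − c/2) → 0 as |z| → ∞ coincides with φ on {|z| > R''} for some R'' ≥ R'. -/

import Mathlib

open Filter

/-- The cubic polynomial `P_{c,a}(z) = z³/3 − (c/2)z² + a³`. -/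
noncomputable def P (c a z : ℂ) : ℂ := z ^ 3 / 3 - c / 2 * z ^ 2 + a ^ 3

namespace BottcherAux

noncomputable def ω : ℂ := ((Real.sqrt 3 : ℝ) : ℂ)⁻¹

noncomputable def D (c a : ℂ) : ℝ :=
  ‖a‖ ^ 3 + ‖c‖ ^ 3 + ‖c‖ ^ 2 + ‖c‖ + 1

noncomputable def R (c a : ℂ) : ℝ := 300 * (‖a‖ + ‖c‖ + D c a)

variable {c a : ℂ}

lemma one_le_D : 1 ≤ D c a := by
  have ha := norm_nonneg a; have hc := norm_nonneg c
  unfold D; nlinarith [pow_nonneg ha 3, pow_nonneg hc 3, pow_nonneg hc 2]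

lemma D_pos : 0 < D c a := lt_of_lt_of_le one_pos one_le_D

lemma R_ge : 300 ≤ R c a := by
  have := one_le_D (c := c) (a := a)
  have ha := norm_nonneg a; have hc := norm_nonneg c
  unfold R; nlinarith

lemma R_pos : 0 < R c a := lt_of_lt_of_le (by norm_num) R_ge

lemma D_le_R : 300 * D c a ≤ R c a := by
  have ha := norm_nonneg a; have hc := norm_nonneg c
  unfold R; nlinarith

lemma c_le_R : 300 * ‖c‖ ≤ R c a := by
  have ha := norm_nonneg a; have h := D_pos (c := c) (a := a)
  unfold R; nlinarith

lemma a_le_R : 300 * ‖a‖ ≤ R c a := by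
  have hc := norm_nonneg c; have h := D_pos (c := c) (a := a)
  unfold R; nlinarith

/-- `√3` bounds -/
lemma sqrt3_ge : (3/2 : ℝ) ≤ Real.sqrt 3 := by
  nlinarith [Real.sq_sqrt (show (0:ℝ) ≤ 3 by norm_num), Real.sqrt_nonneg 3]

lemma sqrt3_le : Real.sqrt 3 ≤ 2 := by
  nlinarith [Real.sq_sqrt (show (0:ℝ) ≤ 3 by norm_num), Real.sqrt_nonneg 3]

lemma sqrt3_pos : 0 < Real.sqrt 3 := Real.sqrt_pos.mpr (by norm_num)

lemma norm_ω_le : ‖ω‖ ≤ 2/3 := by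
  unfold ω
  rw [norm_inv, Complex.norm_real, Real.norm_eq_abs, abs_of_pos sqrt3_pos]
  rw [inv_le_comm₀ sqrt3_pos (by norm_num)]
  calc (2/3 : ℝ)⁻¹ = 3/2 := by norm_num
    _ ≤ _ := sqrt3_ge

lemma norm_ω_ge : (1/2 : ℝ) ≤ ‖ω‖ := by
  unfold ω
  rw [norm_inv, Complex.norm_real, Real.norm_eq_abs, abs_of_pos sqrt3_pos]
  rw [le_inv_comm₀ (by norm_num) sqrt3_pos]
  calc Real.sqrt 3 ≤ 2 := sqrt3_le
    _ = (1/2:ℝ)⁻¹ := by norm_num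

lemma ω_ne : ω ≠ 0 := by
  intro h
  have := norm_ω_ge
  rw [h, norm_zero] at this; norm_num at this

lemma three_ω_cube : 3 * ω ^ 3 = ω := by
  have h3 : ((Real.sqrt 3 : ℝ) : ℂ) ^ 2 = 3 := by
    rw [← Complex.ofReal_pow, Real.sq_sqrt (by norm_num : (0:ℝ) ≤ 3)]
    norm_num
  have hne : ((Real.sqrt 3 : ℝ) : ℂ) ≠ 0 := by
    simpa using (ne_of_gt sqrt3_pos)
  have : ω ^ 2 = 3⁻¹ := by
    unfold ω; rw [inv_pow, h3]
  calc 3 * ω ^ 3 = 3 * ω ^ 2 * ω := by ring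
    _ = ω := by rw [this]; field_simp


/-- the error term -/
noncomputable def q (c a z : ℂ) : ℂ := a^3 - c/2 - c^2/4 * z + c^3/24

lemma P_sub_eq (z : ℂ) : P c a z - c/2 = (z - c/2)^3/3 + q c a z := by
  unfold P q; ring

lemma norm_q_le {z : ℂ} (hz : 1 ≤ ‖z‖) : ‖q c a z‖ ≤ D c a * ‖z‖ := by
  have h1 : ‖q c a z‖ ≤ ‖a‖^3 + ‖c‖/2 + ‖c‖^2/4 * ‖z‖ + ‖c‖^3/24 := by
    have t1 := norm_add_le (a^3 - c/2 - c^2/4 * z) (c^3/24)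
    have t2 := norm_sub_le (a^3 - c/2) (c^2/4 * z)
    have t3 := norm_sub_le (a^3) (c/2)
    have e1 : ‖a^3‖ = ‖a‖^3 := norm_pow _ _
    have e2 : ‖c/2‖ = ‖c‖/2 := by rw [norm_div]; norm_num
    have e3 : ‖c^2/4 * z‖ = ‖c‖^2/4 * ‖z‖ := by
      rw [norm_mul, norm_div, norm_pow]; norm_num
    have e4 : ‖c^3/24‖ = ‖c‖^3/24 := by rw [norm_div, norm_pow]; norm_num
    rw [e4] at t1; rw [e3] at t2; rw [e1, e2] at t3
    unfold q
    linarith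
  refine le_trans h1 ?_
  have ha := norm_nonneg a; have hc := norm_nonneg c
  unfold D
  nlinarith [pow_nonneg ha 3, pow_nonneg hc 3, pow_nonneg hc 2]

lemma half_le {z : ℂ} (hz : R c a < ‖z‖) : ‖z‖/2 ≤ ‖z - c/2‖ ∧ ‖z - c/2‖ ≤ 3/2 * ‖z‖ := by
  have hc : ‖c‖ ≤ ‖z‖ := by
    have := c_le_R (c := c) (a := a); nlinarith [norm_nonneg c]
  have h1 : ‖c/2‖ = ‖c‖/2 := by rw [norm_div]; norm_num
  constructor
  · have := norm_sub_norm_le z (c/2); rw [h1] at this; linarith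
  · have := norm_sub_le z (c/2); rw [h1] at this; linarith

lemma sub_ne {z : ℂ} (hz : R c a < ‖z‖) : z - c/2 ≠ 0 := by
  have h := (half_le hz).1
  have hR := R_pos (c := c) (a := a)
  intro h0; rw [h0, norm_zero] at h; nlinarith

/-- ratio -/
noncomputable def r (c a z : ℂ) : ℂ := 3 * (P c a z - c/2) / (z - c/2)^3

lemma r_sub_one {z : ℂ} (hz : R c a < ‖z‖) : r c a z - 1 = 3 * q c a z / (z - c/2)^3 := by
  have hne : z - c/2 ≠ 0 := sub_ne hz
  have hne3 : (z - c/2)^3 ≠ 0 := pow_ne_zero _ hne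
  rw [r, P_sub_eq,
    show (3:ℂ) * ((z - c/2)^3/3 + q c a z) = (z - c/2)^3 + 3 * q c a z from by ring,
    add_div, div_self hne3]
  ring

lemma norm_r_sub_one {z : ℂ} (hz : R c a < ‖z‖) : ‖r c a z - 1‖ ≤ 24 * D c a / ‖z‖^2 := by
  have hzR := R_pos (c := c) (a := a)
  have hz0 : 0 < ‖z‖ := lt_trans hzR hz
  have hz1 : 1 ≤ ‖z‖ := by have := R_ge (c := c) (a := a); linarith
  have h1 := norm_q_le (c := c) (a := a) hz1
  have h2 := (half_le hz).1
  rw [r_sub_one hz, norm_div, norm_mul, norm_pow]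
  have h20 : 0 < ‖z - c/2‖ := by linarith
  have h3 : (‖z‖/2)^3 ≤ ‖z - c/2‖^3 := by gcongr
  have h4 : 0 < ‖z - c/2‖^3 := pow_pos h20 3
  rw [div_le_div_iff₀ h4 (by positivity)]
  have h5 : ‖(3:ℂ)‖ = 3 := by simp
  rw [h5]
  have hq2 : ‖q c a z‖ * ‖z‖^2 ≤ D c a * ‖z‖ * ‖z‖^2 :=
    mul_le_mul_of_nonneg_right h1 (by positivity)
  have hc3 : 24 * D c a * (‖z‖/2)^3 ≤ 24 * D c a * ‖z - c/2‖^3 :=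
    mul_le_mul_of_nonneg_left h3 (by nlinarith [D_pos (c := c) (a := a)])
  nlinarith [D_pos (c := c) (a := a), hq2, hc3]

lemma norm_r_sub_one_small {z : ℂ} (hz : R c a < ‖z‖) : ‖r c a z - 1‖ ≤ 1/2 := by
  have h := norm_r_sub_one hz
  have hR := R_ge (c := c) (a := a)
  have hD := D_le_R (c := c) (a := a)
  have hz0 : 0 < ‖z‖ := lt_of_lt_of_le (R_pos) (le_of_lt hz)
  have hDp := D_pos (c := c) (a := a)
  have h2 : 24 * D c a / ‖z‖^2 ≤ 1/2 := by
    rw [div_le_iff₀ (by positivity)]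
    nlinarith [R_pos (c := c) (a := a)]
  linarith

lemma r_ne_zero {z : ℂ} (hz : R c a < ‖z‖) : r c a z ≠ 0 := by
  intro h0
  have := norm_r_sub_one_small hz
  rw [h0, zero_sub, norm_neg, norm_one] at this; norm_num at this

lemma r_slitPlane {z : ℂ} (hz : R c a < ‖z‖) : r c a z ∈ Complex.slitPlane := by
  rw [Complex.mem_slitPlane_iff]
  left
  have h := norm_r_sub_one_small hz
  have h2 : |(r c a z - 1).re| ≤ ‖r c a z - 1‖ := Complex.abs_re_le_norm _
  have h3 : (r c a z - 1).re = (r c a z).re - 1 := by simp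
  rw [h3] at h2
  have := abs_le.mp (le_trans h2 h)
  linarith [this.1]

lemma norm_log_r {z : ℂ} (hz : R c a < ‖z‖) :
    ‖Complex.log (r c a z)‖ ≤ 36 * D c a / ‖z‖^2 := by
  have h1 : r c a z = 1 + (r c a z - 1) := by ring
  have h2 := Complex.norm_log_one_add_half_le_self (z := r c a z - 1) (norm_r_sub_one_small hz)
  rw [← h1] at h2
  refine le_trans h2 ?_
  have h3 := norm_r_sub_one hz
  calc 3/2 * ‖r c a z - 1‖ ≤ 3/2 * (24 * D c a / ‖z‖^2) :=
        mul_le_mul_of_nonneg_left h3 (by norm_num)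
    _ = 36 * D c a / ‖z‖^2 := by ring

lemma grow {z : ℂ} (hz : R c a < ‖z‖) : 2 * ‖z‖ ≤ ‖P c a z‖ := by
  have hc : 300 * ‖c‖ ≤ ‖z‖ := le_trans (c_le_R) (le_of_lt hz)
  have ha : 300 * ‖a‖ ≤ ‖z‖ := le_trans (a_le_R) (le_of_lt hz)
  have h300 : 300 ≤ ‖z‖ := le_trans (R_ge) (le_of_lt hz)
  have hz0 : (0:ℝ) < ‖z‖ := by linarith
  have h1 : ‖z^3/3‖ - ‖c/2 * z^2 - a^3‖ ≤ ‖P c a z‖ := by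
    have e : P c a z = z^3/3 - (c/2 * z^2 - a^3) := by unfold P; ring
    rw [e]; exact norm_sub_norm_le _ _
  have h2 : ‖c/2 * z^2 - a^3‖ ≤ ‖c‖/2 * ‖z‖^2 + ‖a‖^3 := by
    have t := norm_sub_le (c/2 * z^2) (a^3)
    have e1 : ‖c/2 * z^2‖ = ‖c‖/2 * ‖z‖^2 := by
      rw [norm_mul, norm_div, norm_pow]; norm_num
    have e2 : ‖a^3‖ = ‖a‖^3 := norm_pow _ _
    rw [e1, e2] at t; exact t
  have h3 : ‖z^3/3‖ = ‖z‖^3/3 := by rw [norm_div, norm_pow]; norm_num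
  rw [h3] at h1
  have ha3 : ‖a‖^3 ≤ (‖z‖/300)^3 := pow_le_pow_left₀ (norm_nonneg a) (by linarith) 3
  have hc2 : ‖c‖/2 * ‖z‖^2 ≤ ‖z‖^3/600 := by
    nlinarith [mul_le_mul_of_nonneg_right (show ‖c‖ ≤ ‖z‖/300 by linarith)
      (le_of_lt (pow_pos hz0 2))]
  have hz2 : 90000 * ‖z‖ ≤ ‖z‖^3 := by nlinarith [sq_nonneg (‖z‖ - 300)]
  nlinarith

lemma P_in {z : ℂ} (hz : R c a < ‖z‖) : R c a < ‖P c a z‖ := by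
  have := grow hz
  have hz0 : 0 < ‖z‖ := lt_of_lt_of_le (R_pos) (le_of_lt hz)
  linarith

lemma iter_in {z : ℂ} (hz : R c a < ‖z‖) (n : ℕ) : R c a < ‖(P c a)^[n] z‖ := by
  induction n with
  | zero => simpa using hz
  | succ n ih => rw [Function.iterate_succ_apply']; exact P_in ih

lemma iter_grow {z : ℂ} (hz : R c a < ‖z‖) (n : ℕ) : 2^n * ‖z‖ ≤ ‖(P c a)^[n] z‖ := by
  induction n with
  | zero => simp
  | succ n ih =>
    rw [Function.iterate_succ_apply']
    calc 2^(n+1) * ‖z‖ = 2 * (2^n * ‖z‖) := by ring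
      _ ≤ 2 * ‖(P c a)^[n] z‖ := by linarith
      _ ≤ _ := grow (iter_in hz n)


noncomputable def F (c a : ℂ) (n : ℕ) (z : ℂ) : ℂ :=
  (1/3 : ℂ)^(n+1) * Complex.log (r c a ((P c a)^[n] z))

noncomputable def S (c a z : ℂ) : ℂ := ∑' n : ℕ, F c a n z

noncomputable def φ (c a z : ℂ) : ℂ := ω * (z - c/2) * Complex.exp (S c a z)

lemma norm_F_le {z : ℂ} (hz : R c a < ‖z‖) (n : ℕ) :
    ‖F c a n z‖ ≤ (1/12 : ℝ)^n * (12 * D c a / ‖z‖^2) := by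
  have hz0 : 0 < ‖z‖ := lt_of_lt_of_le (R_pos) (le_of_lt hz)
  have h1 : ‖F c a n z‖ = (1/3 : ℝ)^(n+1) * ‖Complex.log (r c a ((P c a)^[n] z))‖ := by
    rw [F, norm_mul, norm_pow, norm_div, norm_one]
    norm_num
  rw [h1]
  have h2 := norm_log_r (iter_in hz n)
  have h3 := iter_grow hz n
  have h4 : 0 < (2:ℝ)^n * ‖z‖ := by positivity
  have h5 : ‖Complex.log (r c a ((P c a)^[n] z))‖ ≤ 36 * D c a / ((2^n * ‖z‖)^2) := by
    refine le_trans h2 ?_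
    have hw2 : ((2:ℝ)^n * ‖z‖)^2 ≤ ‖(P c a)^[n] z‖^2 :=
      pow_le_pow_left₀ (le_of_lt h4) h3 2
    exact div_le_div_of_nonneg_left (by nlinarith [D_pos (c := c) (a := a)])
      (by positivity) hw2
  calc (1/3 : ℝ)^(n+1) * ‖Complex.log (r c a ((P c a)^[n] z))‖
      ≤ (1/3 : ℝ)^(n+1) * (36 * D c a / ((2^n * ‖z‖)^2)) := by
        exact mul_le_mul_of_nonneg_left h5 (by positivity)
    _ = (1/12 : ℝ)^n * (12 * D c a / ‖z‖^2) := by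
        rw [show ((1:ℝ)/12)^n = (1/3)^n * (1/4)^n from by rw [← mul_pow]; norm_num,
          pow_succ, mul_pow]
        have h4 : ((2:ℝ)^n)^2 = 4^n := by
          rw [← pow_mul, show n*2 = 2*n from by ring, pow_mul]; norm_num
        rw [h4]
        field_simp
        have h14 : ((1:ℝ)/4)^n * 4^n = 1 := by rw [← mul_pow]; norm_num
        linear_combination (-(D c a) * 36) * h14

lemma summable_geom : Summable (fun n : ℕ => (1/12 : ℝ)^n) :=
  summable_geometric_of_lt_one (by norm_num) (by norm_num)

lemma summable_F {z : ℂ} (hz : R c a < ‖z‖) : Summable (fun n => F c a n z) := by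
  refine Summable.of_norm_bounded (summable_geom.mul_right (12 * D c a / ‖z‖^2)) ?_
  exact norm_F_le hz

lemma norm_S_le {z : ℂ} (hz : R c a < ‖z‖) : ‖S c a z‖ ≤ 24 * D c a / ‖z‖^2 := by
  have hz0 : 0 < ‖z‖ := lt_of_lt_of_le (R_pos) (le_of_lt hz)
  have h1 : ‖S c a z‖ ≤ ∑' n : ℕ, ((1/12 : ℝ)^n * (12 * D c a / ‖z‖^2)) := by
    refine le_trans (norm_tsum_le_tsum_norm ?_) ?_
    · exact Summable.of_nonneg_of_le (fun n => norm_nonneg _) (norm_F_le hz)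
        (summable_geom.mul_right _)
    · exact Summable.tsum_le_tsum (norm_F_le hz)
        (Summable.of_nonneg_of_le (fun n => norm_nonneg _) (norm_F_le hz)
          (summable_geom.mul_right _))
        (summable_geom.mul_right _)
  rw [tsum_mul_right, tsum_geometric_of_lt_one (by norm_num) (by norm_num)] at h1
  refine le_trans h1 ?_
  have hD := D_pos (c := c) (a := a)
  rw [show ((1:ℝ) - 1/12)⁻¹ * (12 * D c a / ‖z‖^2) = (144/11) * (D c a / ‖z‖^2) from by
    norm_num; ring]
  calc (144/11 : ℝ) * (D c a / ‖z‖^2) ≤ 24 * (D c a / ‖z‖^2) :=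
        mul_le_mul_of_nonneg_right (by norm_num) (by positivity)
    _ = 24 * D c a / ‖z‖^2 := by ring

lemma norm_S_le_one {z : ℂ} (hz : R c a < ‖z‖) : ‖S c a z‖ ≤ 1 := by
  have h := norm_S_le hz
  have hz0 : 0 < ‖z‖ := lt_of_lt_of_le (R_pos) (le_of_lt hz)
  have hR := D_le_R (c := c) (a := a)
  have hD := D_pos (c := c) (a := a)
  refine le_trans h ?_
  rw [div_le_one (by positivity)]
  nlinarith [R_ge (c := c) (a := a)]

lemma S_funeq {z : ℂ} (hz : R c a < ‖z‖) :
    S c a (P c a z) = 3 * S c a z - Complex.log (r c a z) := by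
  have h1 : (3 : ℂ) * S c a z = ∑' n : ℕ, 3 * F c a n z := (tsum_mul_left).symm
  have h2 : ∀ n : ℕ, 3 * F c a n z = (1/3 : ℂ)^n * Complex.log (r c a ((P c a)^[n] z)) := by
    intro n
    rw [F, pow_succ]
    ring
  have hsum : Summable (fun n : ℕ => (1/3 : ℂ)^n * Complex.log (r c a ((P c a)^[n] z))) := by
    have := (summable_F hz).mul_left (3 : ℂ)
    simpa only [h2] using this
  have h3 : (3 : ℂ) * S c a z
      = ∑' n : ℕ, (1/3 : ℂ)^n * Complex.log (r c a ((P c a)^[n] z)) := by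
    rw [h1]; exact tsum_congr h2
  rw [h3, Summable.tsum_eq_zero_add hsum]
  have h4 : ((1/3 : ℂ))^(0:ℕ) * Complex.log (r c a ((P c a)^[0] z)) = Complex.log (r c a z) := by
    simp
  have h5 : ∀ n : ℕ, (1/3 : ℂ)^(n+1) * Complex.log (r c a ((P c a)^[n+1] z)) = F c a n (P c a z) := by
    intro n
    rw [F, Function.iterate_succ_apply]
  rw [h4]
  have h6 : ∑' n : ℕ, (1/3 : ℂ)^(n+1) * Complex.log (r c a ((P c a)^[n+1] z))
      = S c a (P c a z) := by
    rw [S]; exact tsum_congr h5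
  rw [h6]; ring

lemma phi_funeq {z : ℂ} (hz : R c a < ‖z‖) : φ c a (P c a z) = (φ c a z)^3 := by
  have hne : z - c/2 ≠ 0 := sub_ne hz
  have hrne : r c a z ≠ 0 := r_ne_zero hz
  have h1 : Complex.exp (S c a (P c a z))
      = (Complex.exp (S c a z))^3 / r c a z := by
    rw [S_funeq hz, Complex.exp_sub, Complex.exp_log hrne]
    congr 1
    rw [show (3 : ℂ) * S c a z = ((3:ℕ) : ℂ) * S c a z from by norm_num,
      Complex.exp_nat_mul]
  have hne3 : (z - c/2)^3 ≠ 0 := pow_ne_zero _ hne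
  have h2 : (ω * (z - c/2))^3 * r c a z = ω * (P c a z - c/2) := by
    calc (ω * (z - c/2))^3 * r c a z
        = (3 * ω^3) * ((P c a z - c/2) * ((z - c/2)^3 / (z - c/2)^3)) := by
          rw [r]; ring
      _ = (3 * ω^3) * (P c a z - c/2) := by rw [div_self hne3, mul_one]
      _ = ω * (P c a z - c/2) := by rw [three_ω_cube]
  rw [φ, φ, h1, ← h2]
  field_simp

lemma norm_phi_sub {z : ℂ} (hz : R c a < ‖z‖) :
    ‖φ c a z - ω * (z - c/2)‖ ≤ 48 * D c a / ‖z‖ := by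
  have hz0 : 0 < ‖z‖ := lt_of_lt_of_le (R_pos) (le_of_lt hz)
  have hD := D_pos (c := c) (a := a)
  have h1 : φ c a z - ω * (z - c/2) = ω * (z - c/2) * (Complex.exp (S c a z) - 1) := by
    rw [φ]; ring
  rw [h1, norm_mul, norm_mul]
  have h2 : ‖Complex.exp (S c a z) - 1‖ ≤ 2 * ‖S c a z‖ := by
    have := Complex.norm_exp_sub_one_le (x := S c a z)
      (norm_S_le_one hz)
    exact this
  have h3 : ‖S c a z‖ ≤ 24 * D c a / ‖z‖^2 := norm_S_le hz
  have h4 : ‖z - c/2‖ ≤ 3/2 * ‖z‖ := (half_le hz).2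
  have h5 : ‖ω‖ ≤ 2/3 := norm_ω_le
  have e1 : ‖ω‖ * ‖z - c/2‖ ≤ (2/3) * (3/2 * ‖z‖) :=
    mul_le_mul h5 h4 (norm_nonneg _) (by norm_num)
  have e2 : ‖Complex.exp (S c a z) - 1‖ ≤ 2 * (24 * D c a / ‖z‖^2) :=
    le_trans h2 (mul_le_mul_of_nonneg_left h3 (by norm_num))
  calc ‖ω‖ * ‖z - c/2‖ * ‖Complex.exp (S c a z) - 1‖
      ≤ (2/3) * (3/2 * ‖z‖) * (2 * (24 * D c a / ‖z‖^2)) :=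
        mul_le_mul e1 e2 (norm_nonneg _) (by positivity)
    _ = 48 * D c a * (‖z‖ / ‖z‖^2) := by ring
    _ = 48 * D c a / ‖z‖ := by
        rw [pow_two, ← div_div, div_self hz0.ne', one_div, div_eq_mul_inv]
  
lemma norm_phi_lb {z : ℂ} (hz : R c a < ‖z‖) : ‖z‖/8 ≤ ‖φ c a z‖ := by
  have hz0 : 0 < ‖z‖ := lt_of_lt_of_le (R_pos) (le_of_lt hz)
  have hD := D_pos (c := c) (a := a)
  have h1 := norm_phi_sub hz
  have h2 : ‖ω * (z - c/2)‖ - ‖φ c a z - ω * (z - c/2)‖ ≤ ‖φ c a z‖ := by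
    have := norm_sub_norm_le (ω * (z - c/2)) (ω * (z - c/2) - φ c a z)
    simp only [sub_sub_cancel] at this
    rw [norm_sub_rev (ω * (z - c/2)) (φ c a z)] at this
    linarith
  have h3 : ‖z‖/4 ≤ ‖ω * (z - c/2)‖ := by
    rw [norm_mul]
    calc ‖z‖/4 = (1/2) * (‖z‖/2) := by ring
      _ ≤ ‖ω‖ * ‖z - c/2‖ := by
          exact mul_le_mul (norm_ω_ge) (half_le hz).1 (by positivity) (norm_nonneg _)
  have h4 : 48 * D c a / ‖z‖ ≤ 1 := by
    rw [div_le_one hz0]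
    nlinarith [D_le_R (c := c) (a := a), R_ge (c := c) (a := a)]
  have h5 : 8 ≤ ‖z‖ := by nlinarith [R_ge (c := c) (a := a)]
  linarith

lemma phi_ne {z : ℂ} (hz : R c a < ‖z‖) : φ c a z ≠ 0 := by
  intro h0
  have := norm_phi_lb hz
  rw [h0, norm_zero] at this
  have hz0 : 0 < ‖z‖ := lt_of_lt_of_le (R_pos) (le_of_lt hz)
  linarith


lemma P_diff : Differentiable ℂ (P c a) := by
  unfold P
  fun_prop

lemma isOpen_U : IsOpen {z : ℂ | R c a < ‖z‖} := by
  have : {z : ℂ | R c a < ‖z‖} = (fun z : ℂ => ‖z‖) ⁻¹' (Set.Ioi (R c a)) := rfl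
  rw [this]
  exact IsOpen.preimage (by fun_prop) isOpen_Ioi

lemma r_diffAt {z : ℂ} (hz : R c a < ‖z‖) : DifferentiableAt ℂ (r c a) z := by
  have hne3 : (z - c/2)^3 ≠ 0 := pow_ne_zero _ (sub_ne hz)
  unfold r
  apply DifferentiableAt.div
  · apply DifferentiableAt.const_mul
    exact (P_diff z).sub_const _
  · fun_prop
  · exact hne3

lemma F_diff (n : ℕ) : DifferentiableOn ℂ (F c a n) {z : ℂ | R c a < ‖z‖} := by
  intro z hz
  have hz' : R c a < ‖z‖ := hz
  have h1 : DifferentiableAt ℂ (fun w => Complex.log (r c a ((P c a)^[n] w))) z := by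
    have hin : R c a < ‖(P c a)^[n] z‖ := iter_in hz' n
    have d1 : DifferentiableAt ℂ (P c a)^[n] z := (P_diff.iterate n) z
    have d2 : DifferentiableAt ℂ (r c a) ((P c a)^[n] z) := r_diffAt hin
    have d3 : DifferentiableAt ℂ Complex.log (r c a ((P c a)^[n] z)) :=
      Complex.differentiableAt_log (r_slitPlane hin)
    exact (d3.comp z (d2.comp z d1) : _)
  exact ((h1.const_mul _).differentiableWithinAt : _)

lemma S_diff : DifferentiableOn ℂ (S c a) {z : ℂ | R c a < ‖z‖} := by
  unfold S
  apply Complex.differentiableOn_tsum_of_summable_norm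
    (u := fun n : ℕ => (1/12 : ℝ)^n * (12 * D c a / (R c a)^2))
  · exact summable_geom.mul_right _
  · exact F_diff
  · exact isOpen_U
  · intro n w hw
    have hw' : R c a < ‖w‖ := hw
    refine le_trans (norm_F_le hw' n) ?_
    have hR := R_pos (c := c) (a := a)
    have hw0 : 0 < ‖w‖ := lt_trans hR hw'
    have : 12 * D c a / ‖w‖^2 ≤ 12 * D c a / (R c a)^2 := by
      apply div_le_div_of_nonneg_left (by nlinarith [D_pos (c := c) (a := a)])
        (by positivity)
      exact pow_le_pow_left₀ (le_of_lt hR) (le_of_lt hw') 2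
    exact mul_le_mul_of_nonneg_left this (by positivity)

lemma phi_diff : DifferentiableOn ℂ (φ c a) {z : ℂ | R c a < ‖z‖} := by
  unfold φ
  apply DifferentiableOn.mul
  · apply DifferentiableOn.const_mul
    fun_prop
  · exact S_diff.cexp

/-- expansion of differences -/
lemma expand {w₁ w₂ : ℂ} (h1 : R c a < ‖w₁‖) (h2 : R c a < ‖w₂‖)
    (hd : ‖w₁ - w₂‖ ≤ 1) : 2 * ‖w₁ - w₂‖ ≤ ‖P c a w₁ - P c a w₂‖ := by
  set d := w₂ - w₁ with hdd
  have hB : P c a w₁ - P c a w₂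
      = (w₁ - w₂) * (w₁^2 + w₁*d + d^2/3 - c*w₁ - c*d/2) := by
    rw [hdd]; unfold P; ring
  rw [hB, norm_mul]
  have hd' : ‖d‖ ≤ 1 := by rw [hdd, ← norm_neg]; simpa using hd
  have h300 : 300 ≤ ‖w₁‖ := le_trans (R_ge) (le_of_lt h1)
  have hc : 300 * ‖c‖ ≤ ‖w₁‖ := le_trans (c_le_R) (le_of_lt h1)
  have hBlow : 2 ≤ ‖w₁^2 + w₁*d + d^2/3 - c*w₁ - c*d/2‖ := by
    have t0 : ‖w₁^2‖ - ‖w₁*d + d^2/3 - c*w₁ - c*d/2‖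
        ≤ ‖w₁^2 + w₁*d + d^2/3 - c*w₁ - c*d/2‖ := by
      have := norm_sub_norm_le (w₁^2) (-(w₁*d + d^2/3 - c*w₁ - c*d/2))
      rw [norm_neg, sub_neg_eq_add] at this
      have e0 : w₁^2 + (w₁*d + d^2/3 - c*w₁ - c*d/2)
          = w₁^2 + w₁*d + d^2/3 - c*w₁ - c*d/2 := by ring
      rw [e0] at this
      exact this
    have t1 : ‖w₁*d + d^2/3 - c*w₁ - c*d/2‖
        ≤ ‖w₁‖*‖d‖ + ‖d‖^2/3 + ‖c‖*‖w₁‖ + ‖c‖*‖d‖/2 := by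
      have u1 := norm_sub_le (w₁*d + d^2/3 - c*w₁) (c*d/2)
      have u2 := norm_sub_le (w₁*d + d^2/3) (c*w₁)
      have u3 := norm_add_le (w₁*d) (d^2/3)
      have e1 : ‖w₁*d‖ = ‖w₁‖*‖d‖ := norm_mul _ _
      have e2 : ‖d^2/3‖ = ‖d‖^2/3 := by rw [norm_div, norm_pow]; norm_num
      have e3 : ‖c*w₁‖ = ‖c‖*‖w₁‖ := norm_mul _ _
      have e4 : ‖c*d/2‖ = ‖c‖*‖d‖/2 := by rw [norm_div, norm_mul]; norm_num
      rw [e4] at u1; rw [e3] at u2; rw [e1, e2] at u3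
      linarith
    have e5 : ‖w₁^2‖ = ‖w₁‖^2 := norm_pow _ _
    rw [e5] at t0
    have hcw : ‖c‖ ≤ ‖w₁‖/300 := by linarith
    have hdn : 0 ≤ ‖d‖ := norm_nonneg d
    nlinarith [sq_nonneg (‖w₁‖ - 300), norm_nonneg c]
  nlinarith [norm_nonneg (w₁ - w₂)]

lemma inj_on : Set.InjOn (φ c a) {z : ℂ | R c a < ‖z‖} := by
  intro z₁ h₁ z₂ h₂ heq
  have h₁' : R c a < ‖z₁‖ := h₁
  have h₂' : R c a < ‖z₂‖ := h₂
  -- φ agrees along iterates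
  have key : ∀ n : ℕ, φ c a ((P c a)^[n] z₁) = φ c a ((P c a)^[n] z₂) := by
    intro n
    induction n with
    | zero => simpa using heq
    | succ n ih =>
      rw [Function.iterate_succ_apply', Function.iterate_succ_apply',
        phi_funeq (iter_in h₁' n), phi_funeq (iter_in h₂' n), ih]
  -- differences along iterates are small
  have small : ∀ n : ℕ, ‖(P c a)^[n] z₁ - (P c a)^[n] z₂‖ ≤ 1 := by
    intro n
    set w₁ := (P c a)^[n] z₁
    set w₂ := (P c a)^[n] z₂
    have hw₁ : R c a < ‖w₁‖ := iter_in h₁' n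
    have hw₂ : R c a < ‖w₂‖ := iter_in h₂' n
    have hsub : ω * (w₁ - w₂)
        = (ω * (w₁ - c/2) - φ c a w₁) + (φ c a w₂ - ω * (w₂ - c/2)) := by
      rw [key n]; ring
    have hnorm : ‖ω * (w₁ - w₂)‖ ≤ 48 * D c a / ‖w₁‖ + 48 * D c a / ‖w₂‖ := by
      rw [hsub]
      refine le_trans (norm_add_le _ _) ?_
      gcongr
      · rw [← norm_neg]
        simpa using norm_phi_sub hw₁
      · exact norm_phi_sub hw₂
    have hD := D_pos (c := c) (a := a)
    have hRD := D_le_R (c := c) (a := a)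
    have hR := R_pos (c := c) (a := a)
    have b1 : 48 * D c a / ‖w₁‖ ≤ 48 * D c a / R c a :=
      div_le_div_of_nonneg_left (by nlinarith) hR (le_of_lt hw₁)
    have b2 : 48 * D c a / ‖w₂‖ ≤ 48 * D c a / R c a :=
      div_le_div_of_nonneg_left (by nlinarith) hR (le_of_lt hw₂)
    have b3 : 48 * D c a / R c a ≤ 48/300 := by
      rw [div_le_div_iff₀ hR (by norm_num)]
      nlinarith
    have b4 : ‖ω * (w₁ - w₂)‖ = ‖ω‖ * ‖w₁ - w₂‖ := norm_mul _ _
    have b5 := norm_ω_ge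
    nlinarith [norm_nonneg (w₁ - w₂)]
  -- differences grow
  have growdiff : ∀ n : ℕ, 2^n * ‖z₁ - z₂‖ ≤ ‖(P c a)^[n] z₁ - (P c a)^[n] z₂‖ := by
    intro n
    induction n with
    | zero => simp
    | succ n ih =>
      rw [Function.iterate_succ_apply', Function.iterate_succ_apply']
      calc 2^(n+1) * ‖z₁ - z₂‖ = 2 * (2^n * ‖z₁ - z₂‖) := by ring
        _ ≤ 2 * ‖(P c a)^[n] z₁ - (P c a)^[n] z₂‖ := by linarith
        _ ≤ _ := expand (iter_in h₁' n) (iter_in h₂' n) (small n)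
  -- conclude
  have hzero : ‖z₁ - z₂‖ = 0 := by
    by_contra hne
    have hpos : 0 < ‖z₁ - z₂‖ := lt_of_le_of_ne (norm_nonneg _) (Ne.symm hne)
    obtain ⟨n, hn⟩ := pow_unbounded_of_one_lt (‖z₁ - z₂‖⁻¹) (one_lt_two (α := ℝ))
    have h1 := growdiff n
    have h2 := small n
    have : (2:ℝ)^n * ‖z₁ - z₂‖ ≤ 1 := le_trans h1 h2
    rw [inv_lt_iff_one_lt_mul₀ hpos] at hn
    nlinarith
  rw [← sub_eq_zero]
  exact norm_eq_zero.mp hzero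


lemma bound_one {w : ℂ} (hw : R c a < ‖w‖) : 48 * D c a / ‖w‖ ≤ 1 := by
  have hw0 : 0 < ‖w‖ := lt_of_lt_of_le (R_pos) (le_of_lt hw)
  rw [div_le_one hw0]
  nlinarith [D_le_R (c := c) (a := a), R_ge (c := c) (a := a), D_pos (c := c) (a := a)]

lemma tendsto_half_pow : Tendsto (fun n : ℕ => (1/10 : ℝ)/2^n) atTop (nhds 0) := by
  have h1 : Tendsto (fun n : ℕ => (1/10 : ℝ) * (1/2)^n) atTop (nhds ((1/10) * 0)) :=
    ((tendsto_pow_atTop_nhds_zero_of_lt_one (by norm_num) (by norm_num)).const_mul (1/10))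
  rw [mul_zero] at h1
  convert h1 using 2 with n
  rw [div_pow, one_pow]
  field_simp

end BottcherAux

open BottcherAux

/-- Existence and uniqueness (near infinity) of the Böttcher coordinate of `P_{c,a}`:
an injective holomorphic `φ` on `{|z| > R}` with `φ(P_{c,a}(z)) = φ(z)³`,
`|P_{c,a}(z)| > R` for `|z| > R`, and `φ(z) − ω(z − c/2) → 0` as `|z| → ∞`, where
`ω = 1/√3`. -/
theorem stmt3 (c a : ℂ) :
    ∃ R : ℝ, 0 < R ∧ ∃ φ : ℂ → ℂ,
      Set.InjOn φ {z : ℂ | R < ‖z‖} ∧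
      DifferentiableOn ℂ φ {z : ℂ | R < ‖z‖} ∧
      (∀ z : ℂ, R < ‖z‖ →
        R < ‖P c a z‖ ∧ φ (P c a z) = (φ z) ^ 3) ∧
      Tendsto (fun z : ℂ => φ z - ((Real.sqrt 3 : ℂ))⁻¹ * (z - c / 2))
        (comap (fun z : ℂ => ‖z‖) atTop) (nhds 0) ∧
      ∀ R' : ℝ, R ≤ R' → ∀ ψ : ℂ → ℂ,
        DifferentiableOn ℂ ψ {z : ℂ | R' < ‖z‖} →
        (∀ z : ℂ, R' < ‖z‖ → ψ (P c a z) = (ψ z) ^ 3) →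
        Tendsto (fun z : ℂ => ψ z - ((Real.sqrt 3 : ℂ))⁻¹ * (z - c / 2))
          (comap (fun z : ℂ => ‖z‖) atTop) (nhds 0) →
        ∃ R'' : ℝ, R' ≤ R'' ∧ ∀ z : ℂ, R'' < ‖z‖ → ψ z = φ z := by
  have hωeq : ((Real.sqrt 3 : ℂ))⁻¹ = ω := rfl
  refine ⟨R c a, R_pos, φ c a, ?_, ?_, ?_, ?_, ?_⟩
  · have := inj_on (c := c) (a := a)
    exact this
  · have := phi_diff (c := c) (a := a)
    exact this
  · intro z hz
    have hz' : R c a < ‖z‖ := by exact hz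
    have h1 := P_in hz'
    exact ⟨h1, phi_funeq hz'⟩
  · -- main asymptotics
    rw [Metric.tendsto_nhds]
    intro ε hε
    set M := max (R c a + 1) (48 * D c a / ε + 1) with hM
    have hmem : (fun z : ℂ => ‖z‖) ⁻¹' (Set.Ici M)
        ∈ comap (fun z : ℂ => ‖z‖) atTop :=
      preimage_mem_comap (Ici_mem_atTop M)
    filter_upwards [hmem] with z hz
    have hzM : M ≤ ‖z‖ := hz
    have hz1 : R c a < ‖z‖ := by
      have := le_max_left (R c a + 1) (48 * D c a / ε + 1)
      linarith
    have hz0 : 0 < ‖z‖ := lt_of_lt_of_le (R_pos) (le_of_lt hz1)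
    have hb := norm_phi_sub hz1
    rw [dist_eq_norm, sub_zero, hωeq]
    have ht : ε * (48 * D c a / ε) = 48 * D c a := mul_div_cancel₀ _ (ne_of_gt hε)
    have hz2 : 48 * D c a / ε + 1 ≤ ‖z‖ := by
      exact le_trans (le_max_right _ _) hzM
    have h6 : ε * (48 * D c a / ε + 1) ≤ ε * ‖z‖ :=
      mul_le_mul_of_nonneg_left hz2 (le_of_lt hε)
    have h7 : 48 * D c a < ε * ‖z‖ := by nlinarith
    calc ‖φ c a z - ω * (z - c/2)‖ ≤ 48 * D c a / ‖z‖ := hb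
      _ < ε := by rw [div_lt_iff₀ hz0]; linarith
  · -- uniqueness
    intro R' hR' ψ hψdiff hψeq hψt
    have h1 := Metric.tendsto_nhds.mp hψt 1 one_pos
    rw [hωeq] at h1
    rw [Filter.eventually_comap, Filter.eventually_atTop] at h1
    obtain ⟨M, hM⟩ := h1
    have hψb : ∀ z : ℂ, M ≤ ‖z‖ → ‖ψ z - ω * (z - c/2)‖ ≤ 1 := by
      intro z hz
      have := hM (‖z‖) hz z rfl
      rw [dist_eq_norm, sub_zero] at this
      exact le_of_lt this
    refine ⟨max R' M, le_max_left _ _, ?_⟩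
    set R'' := max R' M with hR''
    have hR''R : R c a ≤ R'' := le_trans hR' (le_max_left _ _)
    -- uniform bound on u - 1
    have hub : ∀ w : ℂ, R'' < ‖w‖ → ‖ψ w / φ c a w - 1‖ ≤ 1/10 := by
      intro w hw
      have hwR : R c a < ‖w‖ := by
        exact lt_of_le_of_lt hR''R hw
      have hw0 : 0 < ‖w‖ := lt_of_lt_of_le (R_pos) (le_of_lt hwR)
      have hwM : M ≤ ‖w‖ := le_of_lt (lt_of_le_of_lt (le_max_right R' M) hw)
      have hφne : φ c a w ≠ 0 := phi_ne hwR
      have e0 : ψ w - φ c a w = (ψ w - ω * (w - c/2)) - (φ c a w - ω * (w - c/2)) := by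
        ring
      have e1 : ‖ψ w - φ c a w‖ ≤ 2 := by
        rw [e0]
        refine le_trans (norm_sub_le _ _) ?_
        have b1 := hψb w hwM
        have b2 := norm_phi_sub hwR
        have b3 := bound_one hwR
        linarith
      have e2 : ‖w‖/8 ≤ ‖φ c a w‖ := norm_phi_lb hwR
      have e3 : ψ w / φ c a w - 1 = (ψ w - φ c a w) / φ c a w := by
        rw [sub_div, div_self hφne]
      rw [e3, norm_div]
      have e4 : ‖ψ w - φ c a w‖ / ‖φ c a w‖ ≤ 2 / (‖w‖/8) :=
        div_le_div₀ (by norm_num) e1 (by linarith) e2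
      refine le_trans e4 ?_
      rw [div_div_eq_mul_div, div_le_div_iff₀ (by linarith) (by norm_num)]
      have h300 : 300 ≤ ‖w‖ := le_trans (R_ge) (le_of_lt hwR)
      linarith
    -- step
    have hstep : ∀ w : ℂ, R'' < ‖w‖ →
        R'' < ‖P c a w‖ ∧
        ψ (P c a w) / φ c a (P c a w) = (ψ w / φ c a w)^3 := by
      intro w hw
      have hwR : R c a < ‖w‖ := by
        exact lt_of_le_of_lt hR''R hw
      have hw0 : 0 < ‖w‖ := lt_of_lt_of_le (R_pos) (le_of_lt hwR)
      have hg := grow hwR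
      constructor
      · have : (‖w‖ : ℝ) < ‖P c a w‖ := by linarith
        exact lt_trans hw this
      · have hR'w : R' < ‖w‖ := lt_of_le_of_lt (le_max_left R' M) hw
        rw [hψeq w hR'w, phi_funeq hwR, div_pow]
    -- main induction
    have main : ∀ n : ℕ, ∀ w : ℂ, R'' < ‖w‖ →
        ‖ψ w / φ c a w - 1‖ ≤ (1/10) / 2^n := by
      intro n
      induction n with
      | zero => intro w hw; simpa using hub w hw
      | succ n ih =>
        intro w hw
        obtain ⟨hPw, hcube⟩ := hstep w hw
        have hv := ih (P c a w) hPw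
        set u := ψ w / φ c a w with hu_def
        have hu := hub w hw
        have hfac : u^3 - 1 = (u - 1) * ((u-1)^2 + 3*(u-1) + 3) := by ring
        have hlow : 2 ≤ ‖(u-1)^2 + 3*(u-1) + 3‖ := by
          have t0 : ‖(3:ℂ)‖ ≤ ‖(u-1)^2 + 3*(u-1) + 3‖ + ‖(u-1)^2 + 3*(u-1)‖ := by
            have e : (3:ℂ) = ((u-1)^2 + 3*(u-1) + 3) - ((u-1)^2 + 3*(u-1)) := by ring
            calc ‖(3:ℂ)‖ = ‖((u-1)^2 + 3*(u-1) + 3) - ((u-1)^2 + 3*(u-1))‖ := by rw [← e]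
              _ ≤ _ := norm_sub_le _ _
          have tA : ‖(u-1)^2 + 3*(u-1)‖ ≤ ‖u-1‖^2 + 3*‖u-1‖ := by
            refine le_trans (norm_add_le _ _) ?_
            have q1 : ‖(u-1)^2‖ = ‖u-1‖^2 := norm_pow _ _
            have q2 : ‖(3:ℂ)*(u-1)‖ = 3*‖u-1‖ := by
              rw [norm_mul]
              norm_num
            rw [q1, q2]
          have h3n : ‖(3:ℂ)‖ = 3 := by norm_num
          rw [h3n] at t0
          nlinarith [norm_nonneg (u-1)]
        have heq3 : ‖u^3 - 1‖ = ‖u - 1‖ * ‖(u-1)^2 + 3*(u-1) + 3‖ := by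
          rw [hfac, norm_mul]
        have hub2 : ‖u^3 - 1‖ ≤ (1/10) / 2^n := by rw [← hcube]; exact hv
        have hkey : ‖u - 1‖ * 2 ≤ (1/10) / 2^n := by
          calc ‖u - 1‖ * 2 ≤ ‖u - 1‖ * ‖(u-1)^2 + 3*(u-1) + 3‖ :=
                mul_le_mul_of_nonneg_left hlow (norm_nonneg _)
            _ = ‖u^3 - 1‖ := heq3.symm
            _ ≤ _ := hub2
        have e : (1/10 : ℝ) / 2^(n+1) = ((1/10) / 2^n) / 2 := by
          rw [pow_succ]; ring
        rw [e]
        linarith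
    -- conclude
    intro z hz
    have hzR : R c a < ‖z‖ := by
      exact lt_of_le_of_lt hR''R hz
    have hφne : φ c a z ≠ 0 := phi_ne hzR
    have h0 : ‖ψ z / φ c a z - 1‖ ≤ 0 :=
      ge_of_tendsto' tendsto_half_pow (fun n => main n z hz)
    have h1 : ψ z / φ c a z - 1 = 0 :=
      norm_eq_zero.mp (le_antisymm h0 (norm_nonneg _))
    have h2 : ψ z / φ c a z = 1 := by
      rw [sub_eq_zero] at h1; exact h1
    rwa [div_eq_one_iff_eq hφne] at h2
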